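/- For every real ρ > 0, a > 0 and ε > 0 there exists N ∈ ℕ such that for all integers n ≥ N: ∑_{k=⌈e^{n(a+ε)}⌉}^{∞} k^ρ (1 − e^{−na})^{k−1} ≤ exp(−e^{nε}/2). In particular this tail of the series decays double-exponentially fast in n. -/
import Mathlib

set_option maxHeartbeats 1000000

open Filter Real

/-- Tail part of the geometric-type sum decays double-exponentially: for `ρ, a, ε > 0`
there is `N` such that for all `n ≥ N`,
`∑_{k=⌈e^{n(a+ε)}⌉}^∞ k^ρ (1 - e^{-na})^{k-1} ≤ exp(-e^{nε}/2)`. -/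
theorem tail_sum_double_exponential (ρ a ε : ℝ) (hρ : 0 < ρ) (ha : 0 < a) (hε : 0 < ε) :
    ∃ N : ℕ, ∀ n : ℕ, N ≤ n →
      ∑' j : ℕ,
          ((⌈Real.exp ((n : ℝ) * (a + ε))⌉₊ + j : ℕ) : ℝ) ^ ρ *
            (1 - Real.exp (-(n : ℝ) * a)) ^ (⌈Real.exp ((n : ℝ) * (a + ε))⌉₊ + j - 1) ≤
        Real.exp (-Real.exp ((n : ℝ) * ε) / 2) := by
  have haε : (0:ℝ) < a + ε := by linarith
  set θ : ℝ := ε / (2*(a+ε)) with hθdef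
  have hθ : 0 < θ := div_pos hε (by linarith)
  have hθ1 : θ < 1 := by
    rw [hθdef, div_lt_one (by linarith)]; linarith
  set C : ℝ := max (4*ρ/θ) (max 24 (8*a/ε)) with hCdef
  have hev : ∀ᶠ n : ℕ in atTop, C ≤ Real.exp ((n:ℝ)*(ε/2)) := by
    have h₁ : Tendsto (fun n : ℕ => Real.exp ((n:ℝ)*(ε/2))) atTop atTop := by
      apply Real.tendsto_exp_atTop.comp
      exact Tendsto.atTop_mul_const (by linarith) tendsto_natCast_atTop_atTop
    exact h₁.eventually_ge_atTop _
  obtain ⟨N, hN⟩ := eventually_atTop.mp hev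
  refine ⟨N, fun n hn => ?_⟩
  have hcond : C ≤ Real.exp ((n:ℝ)*(ε/2)) := hN n hn
  set b : ℝ := Real.exp (-(n:ℝ)*a) with hbdef
  set q : ℝ := 1 - b with hqdef
  set M : ℕ := ⌈Real.exp ((n:ℝ)*(a+ε))⌉₊ with hMdef
  set E : ℝ := Real.exp ((n:ℝ)*ε) with hEdef
  have hb0 : 0 < b := Real.exp_pos _
  have hb1 : b ≤ 1 := by
    rw [hbdef]
    have : -(n:ℝ)*a ≤ 0 := by
      have : (0:ℝ) ≤ (n:ℝ) := Nat.cast_nonneg n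
      nlinarith
    calc Real.exp (-(n:ℝ)*a) ≤ Real.exp 0 := Real.exp_le_exp.mpr this
    _ = 1 := Real.exp_zero
  have hq0 : 0 ≤ q := by simp only [hqdef]; linarith
  have hqe : q ≤ Real.exp (-b) := by
    have := Real.add_one_le_exp (-b); simp only [hqdef]; linarith
  have hE1 : Real.exp ((n:ℝ)*(a+ε)) ≤ (M:ℝ) := Nat.le_ceil _
  have hM1 : 1 ≤ M := Nat.ceil_pos.mpr (Real.exp_pos _)
  have hexp1 : (1:ℝ) ≤ Real.exp ((n:ℝ)*(a+ε)) := by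
    apply Real.one_le_exp; positivity
  -- the exponent condition from hcond
  have hcond1 : 4*ρ/θ ≤ Real.exp ((n:ℝ)*(ε/2)) := (le_max_left _ _).trans hcond
  have hcond2 : 24 ≤ Real.exp ((n:ℝ)*(ε/2)) :=
    ((le_max_left _ _).trans (le_max_right _ _)).trans hcond
  have hcond3 : 8*a/ε ≤ Real.exp ((n:ℝ)*(ε/2)) :=
    ((le_max_right _ _).trans (le_max_right _ _)).trans hcond
  -- key polynomial-vs-exponential bound
  have hkey : ∀ k : ℕ, M ≤ k → (k:ℝ)^ρ ≤ Real.exp ((k:ℝ)*(b/4)) := by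
    intro k hk
    have hkR : Real.exp ((n:ℝ)*(a+ε)) ≤ (k:ℝ) := hE1.trans (by exact_mod_cast hk)
    have hk1 : (1:ℝ) ≤ (k:ℝ) := hexp1.trans hkR
    have hk0 : (0:ℝ) < (k:ℝ) := by linarith
    have hlog : Real.log k ≤ (k:ℝ)^θ / θ := Real.log_le_rpow_div hk0.le hθ
    have h1θ : (0:ℝ) < 1 - θ := by linarith
    have hpow : Real.exp ((n:ℝ)*(a+ε)) ^ (1-θ) ≤ (k:ℝ)^(1-θ) :=
      Real.rpow_le_rpow (Real.exp_pos _).le hkR h1θ.le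
    have hsplitθ : (a+ε)*(1-θ) = a + ε/2 := by
      rw [hθdef]; field_simp; ring
    have hexppow : Real.exp ((n:ℝ)*(a+ε)) ^ (1-θ) = Real.exp ((n:ℝ)*a) * Real.exp ((n:ℝ)*(ε/2)) := by
      rw [← Real.exp_mul, ← Real.exp_add]
      congr 1
      rw [mul_assoc, hsplitθ]; ring
    have hbinv : b * Real.exp ((n:ℝ)*a) = 1 := by
      rw [hbdef, ← Real.exp_add]; rw [show -(n:ℝ)*a + (n:ℝ)*a = 0 by ring, Real.exp_zero]
    have hge : 4*ρ/θ ≤ (k:ℝ)^(1-θ) * b := by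
      have h1 : Real.exp ((n:ℝ)*a) * Real.exp ((n:ℝ)*(ε/2)) * b ≤ (k:ℝ)^(1-θ) * b := by
        apply mul_le_mul_of_nonneg_right _ hb0.le
        rw [← hexppow]; exact hpow
      have h2 : Real.exp ((n:ℝ)*a) * Real.exp ((n:ℝ)*(ε/2)) * b = Real.exp ((n:ℝ)*(ε/2)) := by
        rw [show Real.exp ((n:ℝ)*a) * Real.exp ((n:ℝ)*(ε/2)) * b
              = (b * Real.exp ((n:ℝ)*a)) * Real.exp ((n:ℝ)*(ε/2)) by ring, hbinv, one_mul]
      rw [h2] at h1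
      exact hcond1.trans h1
    have hkθ0 : (0:ℝ) < (k:ℝ)^θ := Real.rpow_pos_of_pos hk0 θ
    have hksplit : (k:ℝ) = (k:ℝ)^θ * (k:ℝ)^(1-θ) := by
      rw [← Real.rpow_add hk0, show θ + (1-θ) = 1 by ring, Real.rpow_one]
    rw [Real.rpow_def_of_pos hk0]
    apply Real.exp_le_exp.mpr
    calc Real.log k * ρ ≤ ((k:ℝ)^θ / θ) * ρ := mul_le_mul_of_nonneg_right hlog hρ.le
      _ = (k:ℝ)^θ * (ρ/θ) := by ring
      _ ≤ (k:ℝ)^θ * ((k:ℝ)^(1-θ) * b / 4) := by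
          apply mul_le_mul_of_nonneg_left _ hkθ0.le
          rw [div_le_iff₀ hθ] at hge ⊢
          · linarith [hge]
      _ = (k:ℝ) * (b/4) := by
          conv_rhs => rw [hksplit]
          ring
  -- geometric domination
  set r : ℝ := Real.exp (-(3/4*b)) with hrdef
  have hr0 : 0 < r := Real.exp_pos _
  have hr1 : r < 1 := by
    rw [hrdef, Real.exp_lt_one_iff]; linarith
  have hterm : ∀ j : ℕ,
      ((M + j : ℕ) : ℝ) ^ ρ * q ^ (M + j - 1) ≤ (Real.exp b * r ^ M) * r ^ j := by
    intro j
    have hk : M ≤ M + j := Nat.le_add_right _ _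
    have h1 : ((M + j : ℕ) : ℝ) ^ ρ ≤ Real.exp (((M+j:ℕ):ℝ)*(b/4)) := hkey _ hk
    have hq2 : q ^ (M + j - 1) ≤ Real.exp (-b) ^ (M + j - 1) :=
      pow_le_pow_left₀ hq0 hqe _
    have hcast : (((M + j - 1 : ℕ)):ℝ) = ((M+j:ℕ):ℝ) - 1 := by
      have : 1 ≤ M + j := le_trans hM1 hk
      push_cast [Nat.cast_sub this]
      ring
    have h2 : Real.exp (-b) ^ (M + j - 1) = Real.exp ((((M + j : ℕ) : ℝ) - 1) * (-b)) := by
      rw [← Real.exp_nat_mul, hcast]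
    have h3 : ((M + j : ℕ) : ℝ) ^ ρ * q ^ (M + j - 1)
        ≤ Real.exp (((M+j:ℕ):ℝ)*(b/4)) * Real.exp ((((M + j : ℕ) : ℝ) - 1) * (-b)) := by
      apply mul_le_mul h1 (h2 ▸ hq2) (pow_nonneg hq0 _) (Real.exp_nonneg _)
    refine h3.trans (le_of_eq ?_)
    rw [← Real.exp_add, hrdef, ← Real.exp_nat_mul, ← Real.exp_nat_mul, ← Real.exp_add,
      ← Real.exp_add]
    congr 1
    push_cast
    ring
  have hgsum : Summable (fun j : ℕ => (Real.exp b * r ^ M) * r ^ j) :=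
    (summable_geometric_of_lt_one hr0.le hr1).mul_left _
  have hfnonneg : ∀ j : ℕ, 0 ≤ ((M + j : ℕ) : ℝ) ^ ρ * q ^ (M + j - 1) := by
    intro j
    apply mul_nonneg (Real.rpow_nonneg (Nat.cast_nonneg _) _) (pow_nonneg hq0 _)
  have hfsum : Summable (fun j : ℕ => ((M + j : ℕ) : ℝ) ^ ρ * q ^ (M + j - 1)) :=
    Summable.of_nonneg_of_le hfnonneg hterm hgsum
  have hle1 : ∑' j : ℕ, ((M + j : ℕ) : ℝ) ^ ρ * q ^ (M + j - 1)
      ≤ ∑' j : ℕ, (Real.exp b * r ^ M) * r ^ j := Summable.tsum_le_tsum hterm hfsum hgsum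
  have heq1 : ∑' j : ℕ, (Real.exp b * r ^ M) * r ^ j
      = (Real.exp b * r ^ M) * (1 - r)⁻¹ := by
    rw [tsum_mul_left, tsum_geometric_of_lt_one hr0.le hr1]
  -- final numeric bound
  have hbM : E ≤ b * (M:ℝ) := by
    have h1 : b * Real.exp ((n:ℝ)*(a+ε)) ≤ b * (M:ℝ) := by
      apply mul_le_mul_of_nonneg_left hE1 hb0.le
    refine le_trans (le_of_eq ?_) h1
    rw [hbdef, hEdef, ← Real.exp_add]
    congr 1; ring
  have h1r : (3/16)*b ≤ 1 - r := by
    have hre : r * Real.exp (3/4*b) = 1 := by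
      rw [hrdef, ← Real.exp_add, show -(3/4*b) + 3/4*b = 0 by ring, Real.exp_zero]
    have hec : 1 + 3/4*b ≤ Real.exp (3/4*b) := by
      have := Real.add_one_le_exp (3/4*b); linarith
    have hrlow : 1 - 3/4*b ≤ r := by
      have := Real.add_one_le_exp (-(3/4*b))
      rw [← hrdef] at this; linarith
    nlinarith [hr0, mul_le_mul_of_nonneg_left hec hr0.le]
  have hEbig : 24 + 4*a*(n:ℝ) ≤ E := by
    have hE2 : E = Real.exp ((n:ℝ)*(ε/2)) * Real.exp ((n:ℝ)*(ε/2)) := by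
      rw [hEdef, ← Real.exp_add]; congr 1; ring
    have hx1 : 1 + (n:ℝ)*(ε/2) ≤ Real.exp ((n:ℝ)*(ε/2)) := by
      have := Real.add_one_le_exp ((n:ℝ)*(ε/2)); linarith
    have hn0 : (0:ℝ) ≤ (n:ℝ) := Nat.cast_nonneg n
    have h24 : (24:ℝ) ≤ Real.exp ((n:ℝ)*(ε/2)) := hcond2
    have h8a : 8*a ≤ ε * Real.exp ((n:ℝ)*(ε/2)) := by
      rw [div_le_iff₀ hε] at hcond3; linarith [hcond3]
    nlinarith [mul_le_mul h24 hx1 (by positivity) (by linarith),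
      mul_le_mul_of_nonneg_left h8a (mul_nonneg hn0 (by norm_num : (0:ℝ) ≤ 1/2))]
  have hexp5 : Real.exp (-(5:ℝ)) ≤ 3/16 := by
    have h6 : (6:ℝ) ≤ Real.exp 5 := by
      have := Real.add_one_le_exp (5:ℝ); linarith
    have := Real.exp_pos (5:ℝ)
    rw [Real.exp_neg]
    rw [inv_le_iff_one_le_mul₀ (by positivity)]
    nlinarith
  have hfinal : (Real.exp b * r ^ M) * (1 - r)⁻¹ ≤ Real.exp (-E/2) := by
    have hrM : Real.exp b * r ^ M = Real.exp (b - 3/4*(b*(M:ℝ))) := by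
      rw [hrdef, ← Real.exp_nat_mul, ← Real.exp_add]
      congr 1; ring
    have h1rpos : (0:ℝ) < 1 - r := by linarith
    have hApos : (0:ℝ) < (3/16)*b := by positivity
    have hinv : (1-r)⁻¹ ≤ ((3/16)*b)⁻¹ := by
      exact inv_anti₀ hApos h1r
    calc (Real.exp b * r ^ M) * (1 - r)⁻¹
        ≤ Real.exp (b - 3/4*(b*(M:ℝ))) * ((3/16)*b)⁻¹ := by
          rw [hrM]
          exact mul_le_mul_of_nonneg_left hinv (Real.exp_nonneg _)
      _ ≤ Real.exp (-E/2) := by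
          rw [← div_eq_mul_inv, div_le_iff₀ hApos]
          have hexpo : b - 3/4*(b*(M:ℝ)) ≤ -E/2 + (-5) + (-(n:ℝ)*a) := by
            have hna : (0:ℝ) ≤ (n:ℝ)*a := by positivity
            nlinarith [hbM, hb1, hEbig]
          calc Real.exp (b - 3/4*(b*(M:ℝ)))
              ≤ Real.exp (-E/2 + (-5) + (-(n:ℝ)*a)) := Real.exp_le_exp.mpr hexpo
            _ = Real.exp (-E/2) * Real.exp (-(5:ℝ)) * b := by
                rw [hbdef, ← Real.exp_add, ← Real.exp_add]
            _ ≤ Real.exp (-E/2) * (3/16) * b := by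
                apply mul_le_mul_of_nonneg_right _ hb0.le
                exact mul_le_mul_of_nonneg_left hexp5 (Real.exp_nonneg _)
            _ = Real.exp (-E/2) * (3/16*b) := by ring
  calc ∑' j : ℕ, ((M + j : ℕ) : ℝ) ^ ρ * q ^ (M + j - 1)
      ≤ (Real.exp b * r ^ M) * (1 - r)⁻¹ := heq1 ▸ hle1
    _ ≤ Real.exp (-E/2) := hfinal
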